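/- Let (V, h) be an even-dimensional quadratic real vector space of signature p - q ≡ 0, 2 (mod 8), γ : Cl(V*,h*) → End(Σ) an irreducible real Clifford representation, and B an admissible pairing on Σ of adjoint type s and symmetry type σ. If α ∈ ∧V* is a signed square of a spinor, i.e. Ψ_γ(α) = ±ξ ⊗ ξ* for some ξ ∈ Σ, and k ∈ {1,...,d} satisfies (-1)^{k(1-s)/2} (-1)^{k(k-1)/2} = -σ, then the degree-k component α⁽ᵏ⁾ vanishes. -/

import Mathlib

noncomputable instance : Invertible (2 : ℝ) := invertibleOfNonzero two_ne_zero

namespace Stmt19Aux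

open CliffordAlgebra

variable {R M : Type*} [CommRing R] [AddCommGroup M] [Module R M]
variable {Q Q' : QuadraticForm R M} {B : LinearMap.BilinForm R M}

lemma involute_contractLeft (d : Module.Dual R M) (x : CliffordAlgebra Q) :
    involute (contractLeft (Q := Q) d x) = - contractLeft (Q := Q) d (involute x) := by
  induction' x using CliffordAlgebra.left_induction with r a b ha hb y v hy
  · simp [contractLeft_algebraMap]
  · simp only [map_add, ha, hb, neg_add]
  · simp only [contractLeft_ι_mul, map_sub, map_smul, map_mul, involute_ι, map_neg, hy,
      mul_neg, neg_mul, neg_neg, neg_sub]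

lemma contractLeft_mul_ι (d : Module.Dual R M) (m : M) (x : CliffordAlgebra Q) :
    contractLeft (Q := Q) d (x * ι Q m) =
      contractLeft (Q := Q) d x * ι Q m + d m • involute x := by
  induction' x using CliffordAlgebra.left_induction with r a b ha hb y v hy
  · simp [contractLeft_algebraMap_mul, contractLeft_ι, contractLeft_algebraMap,
      Algebra.smul_def, ← map_mul, mul_comm]
  · simp only [add_mul, map_add, ha, hb, smul_add]
    abel
  · rw [mul_assoc, contractLeft_ι_mul, contractLeft_ι_mul, hy]
    simp only [map_mul, involute_ι, mul_add, mul_neg, neg_mul, sub_mul, smul_mul_assoc,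
      smul_neg, neg_neg, mul_smul_comm, mul_assoc]
    abel

lemma mul_ι_contractRight (d : Module.Dual R M) (m : M) (x : CliffordAlgebra Q) :
    contractRight (Q := Q) (ι Q m * x) d =
      ι Q m * contractRight (Q := Q) x d + d m • involute x := by
  rw [contractRight_eq, reverse.map_mul, reverse_ι, contractLeft_mul_ι, map_add,
    reverse.map_mul, reverse_ι, map_smul, ← contractRight_eq, reverse_involute, reverse_reverse]

lemma contractLeft_contractRight (d d' : Module.Dual R M) (x : CliffordAlgebra Q) :
    contractLeft (Q := Q) d (contractRight (Q := Q) x d') =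
      contractRight (Q := Q) (contractLeft (Q := Q) d x) d' := by
  induction' x using CliffordAlgebra.left_induction with r a b ha hb y v hy
  · simp [contractRight_algebraMap, contractLeft_algebraMap]
  · simp only [map_add, LinearMap.add_apply, ha, hb]
  · have hinv : contractLeft (Q := Q) d (involute y) =
        - involute (contractLeft (Q := Q) d y) := by
      rw [involute_contractLeft, neg_neg]
    simp only [mul_ι_contractRight, contractLeft_ι_mul, map_add, map_sub, map_smul,
      LinearMap.add_apply, LinearMap.sub_apply, LinearMap.smul_apply, hy, hinv, smul_neg]
    abel


open CliffordAlgebra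

variable {R M : Type*} [CommRing R] [AddCommGroup M] [Module R M]
variable {Q Q' : QuadraticForm R M} {B : LinearMap.BilinForm R M}

lemma changeForm_mul_ι (hB : ∀ a b, B a b = B b a) (h : B.toQuadraticMap = Q' - Q)
    (m : M) (x : CliffordAlgebra Q) :
    changeForm h (x * ι Q m) = changeForm h x * ι Q' m
      - contractRight (Q := Q') (changeForm h x) (B m) := by
  induction' x using CliffordAlgebra.left_induction with r a b ha hb y v hy
  · simp [Algebra.algebraMap_eq_smul_one, one_mul, map_smul, changeForm_ι,
      changeForm_algebraMap, contractRight_algebraMap, smul_mul_assoc]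
  · simp only [add_mul, map_add, ha, hb, LinearMap.add_apply]
    abel
  · rw [mul_assoc, changeForm_ι_mul, hy, changeForm_ι_mul]
    simp only [mul_sub, sub_mul, map_sub, LinearMap.sub_apply, contractLeft_mul_ι,
      mul_ι_contractRight, contractLeft_contractRight, map_add, map_smul,
      LinearMap.add_apply, LinearMap.smul_apply, hB m v, mul_assoc]
    abel

lemma changeForm_reverse (hB : ∀ a b, B a b = B b a) (h : B.toQuadraticMap = Q' - Q)
    (x : CliffordAlgebra Q) :
    changeForm h (reverse x) = reverse (changeForm h x) := by
  induction' x using CliffordAlgebra.right_induction with r a b ha hb y v hy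
  · simp [changeForm_algebraMap]
  · simp only [map_add, ha, hb]
  · rw [reverse.map_mul, reverse_ι, changeForm_ι_mul, hy, changeForm_mul_ι hB, map_sub,
      reverse.map_mul, reverse_ι]
    congr 1
    rw [contractRight_eq, reverse_reverse]

lemma changeForm_involute (h : B.toQuadraticMap = Q' - Q) (x : CliffordAlgebra Q) :
    changeForm h (involute x) = involute (changeForm h x) := by
  induction' x using CliffordAlgebra.left_induction with r a b ha hb y v hy
  · simp [changeForm_algebraMap]
  · simp only [map_add, ha, hb]
  · rw [map_mul, involute_ι, neg_mul, map_neg, changeForm_ι_mul, changeForm_ι_mul, hy,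
      map_sub, map_mul, involute_ι, involute_contractLeft, neg_mul, neg_sub_neg]
    abel


open CliffordAlgebra

section Ext
variable {V : Type*} [AddCommGroup V] [Module ℝ V]

lemma ι_mul_pow_comm (n : ℕ) (x : ExteriorAlgebra ℝ V) (hx : x ∈ ⋀[ℝ]^n V) (m : V) :
    ExteriorAlgebra.ι ℝ m * x = ((-1 : ℝ) ^ n) • (x * ExteriorAlgebra.ι ℝ m) := by
  induction hx using Submodule.pow_induction_on_left' with
  | algebraMap r => simp [Algebra.commutes]
  | add a b i ha hb iha ihb => simp only [mul_add, add_mul, smul_add, iha, ihb]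
  | mem_mul a ha i z hz ihz =>
    obtain ⟨v, rfl⟩ := ha
    have hanti : ExteriorAlgebra.ι ℝ m * ExteriorAlgebra.ι ℝ v
        = - (ExteriorAlgebra.ι ℝ v * ExteriorAlgebra.ι ℝ m) := by
      have := CliffordAlgebra.ι_mul_ι_add_swap (Q := (0 : QuadraticForm ℝ V)) m v
      simp only [QuadraticMap.polar, QuadraticMap.zero_apply, sub_zero, map_zero, zero_sub,
        neg_zero, sub_self] at this
      exact eq_neg_of_add_eq_zero_left this
    rw [← mul_assoc, hanti, neg_mul, mul_assoc, ihz, pow_succ]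
    simp [mul_smul_comm, smul_smul, mul_assoc, mul_comm]

lemma involute_exteriorPower (n : ℕ) (x : ExteriorAlgebra ℝ V) (hx : x ∈ ⋀[ℝ]^n V) :
    involute (Q := (0 : QuadraticForm ℝ V)) x = ((-1 : ℝ) ^ n) • x := by
  induction hx using Submodule.pow_induction_on_left' with
  | algebraMap r => simp
  | add a b i ha hb iha ihb => simp only [map_add, iha, ihb, smul_add]
  | mem_mul a ha i z hz ihz =>
    obtain ⟨v, rfl⟩ := ha
    rw [map_mul, ihz, involute_ι, pow_succ]
    simp [mul_smul_comm, smul_smul, mul_comm, neg_mul]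

lemma reverse_exteriorPower (n : ℕ) (x : ExteriorAlgebra ℝ V) (hx : x ∈ ⋀[ℝ]^n V) :
    reverse (Q := (0 : QuadraticForm ℝ V)) x = ((-1 : ℝ) ^ (n * (n - 1) / 2)) • x := by
  induction hx using Submodule.pow_induction_on_right' with
  | algebraMap r => simp
  | add a b i ha hb iha ihb => simp only [map_add, iha, ihb, smul_add]
  | mul_mem i z hz ihz a ha =>
    obtain ⟨v, rfl⟩ := ha
    have harith : (i + 1) * i / 2 = i * (i - 1) / 2 + i := by
      rcases i with _ | j
      · rfl
      · have h1 : (j + 1 + 1) * (j + 1) = (j + 1) * j + 2 * (j + 1) := by ring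
        rw [h1, Nat.succ_sub_one, Nat.add_mul_div_left _ _ (by norm_num : 0 < 2)]
    rw [reverse.map_mul, reverse_ι, ihz, mul_smul_comm, ι_mul_pow_comm i z hz v]
    simp only [Nat.succ_eq_add_one, Nat.add_sub_cancel, harith, pow_add, smul_smul]

end Ext

open CliffordAlgebra

variable {R M : Type*} [CommRing R] [AddCommGroup M] [Module R M]
variable {Q Q' : QuadraticForm R M} {B : LinearMap.BilinForm R M}

variable [Invertible (2 : R)]

lemma assoc_symm (Q : QuadraticForm R M) :
    ∀ a b, (QuadraticMap.associated (R := R) (-Q)) a b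
      = (QuadraticMap.associated (R := R) (-Q)) b a := by
  intro a b
  exact (QuadraticMap.associated_isSymm R (-Q) a b)

lemma equivExterior_reverse (Q : QuadraticForm R M) (x : CliffordAlgebra Q) :
    equivExterior Q (reverse x) = reverse (Q := (0 : QuadraticForm R M)) (equivExterior Q x) := by
  simpa using changeForm_reverse (assoc_symm Q) changeForm.associated_neg_proof x

lemma equivExterior_involute (Q : QuadraticForm R M) (x : CliffordAlgebra Q) :
    equivExterior Q (involute x)
      = involute (Q := (0 : QuadraticForm R M)) (equivExterior Q x) := by
  simpa using changeForm_involute changeForm.associated_neg_proof x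


open CliffordAlgebra

lemma component_eq_zero {V : Type*} [AddCommGroup V] [Module ℝ V]
    (α : ExteriorAlgebra ℝ V)
    (f : ExteriorAlgebra ℝ V →ₗ[ℝ] ExteriorAlgebra ℝ V) (c : ℕ → ℝ) (σ : ℝ) (hσ : σ ≠ 0)
    (hf : ∀ (n : ℕ) (x : ExteriorAlgebra ℝ V), x ∈ ⋀[ℝ]^n V → f x = c n • x)
    (hfα : f α = σ • α) (k : ℕ) (hck : c k = -σ) :
    (DirectSum.decompose (fun i : ℕ => ⋀[ℝ]^i V) α k : ExteriorAlgebra ℝ V) = 0 := by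
  classical
  set 𝒜 : ℕ → Submodule ℝ (ExteriorAlgebra ℝ V) := fun i => ⋀[ℝ]^i V with h𝒜
  by_cases hk : (DirectSum.decompose 𝒜 α) k = 0
  · rw [hk]; rfl
  · have hmem : k ∈ (DirectSum.decompose 𝒜 α).support := DFinsupp.mem_support_iff.mpr hk
    have hsum := DirectSum.sum_support_decompose 𝒜 α
    have h1 : ∑ i ∈ (DirectSum.decompose 𝒜 α).support,
        (c i - σ) • ((DirectSum.decompose 𝒜 α i : ExteriorAlgebra ℝ V)) = 0 := by
      have hfa : f α = ∑ i ∈ (DirectSum.decompose 𝒜 α).support,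
          c i • ((DirectSum.decompose 𝒜 α i : ExteriorAlgebra ℝ V)) := by
        conv_lhs => rw [← hsum]
        rw [map_sum]
        exact Finset.sum_congr rfl fun i _ => hf i _ (SetLike.coe_mem _)
      simp only [sub_smul]
      rw [Finset.sum_sub_distrib, ← Finset.smul_sum, hsum, ← hfa, hfα, sub_self]
    set L : ExteriorAlgebra ℝ V →ₗ[ℝ] ExteriorAlgebra ℝ V :=
      (Submodule.subtype (𝒜 k)) ∘ₗ (DirectSum.component ℝ ℕ (fun i => 𝒜 i) k) ∘ₗ
        (DirectSum.decomposeLinearEquiv 𝒜).toLinearMap with hL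
    have hLval : ∀ z : ExteriorAlgebra ℝ V,
        L z = (DirectSum.decompose 𝒜 z k : ExteriorAlgebra ℝ V) := fun z => rfl
    have h2 := congrArg L h1
    rw [map_sum, map_zero] at h2
    rw [Finset.sum_eq_single_of_mem k hmem] at h2
    · rw [map_smul, hLval, DirectSum.decompose_coe, DirectSum.of_eq_same] at h2
      have hcs : c k - σ ≠ 0 := by
        rw [hck]
        intro hcon
        apply hσ
        linarith
      have := (smul_eq_zero.mp h2).resolve_left hcs
      exact this
    · intro i hi hne
      rw [map_smul, hLval, DirectSum.decompose_coe, DirectSum.of_eq_of_ne _ _ _ hne.symm]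
      simp
end Stmt19Aux

open Stmt19Aux in
/-- let `γ : Cl(V*,h*) ≅ End(Σ)` be an irreducible real Clifford
representation (signature `p - q ≡ 0,2 (mod 8)`, so `γ` is a unital algebra
isomorphism), `B` an admissible pairing of adjoint type `s` and symmetry type `σ`
(i.e. `B(γ(x)ξ₁, ξ₂) = B(ξ₁, γ((π^{(1-s)/2}∘τ)(x)) ξ₂)` and `B(x,y) = σ B(y,x)`).
If `α ∈ ∧V*` is a signed square of a spinor, i.e. `Ψ_γ(α) = ±ξ ⊗ ξ*`, and `k`
satisfies `(-1)^{k(1-s)/2} (-1)^{k(k-1)/2} = -σ`, then `α⁽ᵏ⁾ = 0`. -/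
theorem stmt_19 (V S : Type*) [AddCommGroup V] [Module ℝ V] [FiniteDimensional ℝ V]
    [AddCommGroup S] [Module ℝ S] [FiniteDimensional ℝ S]
    (Q : QuadraticForm ℝ V) (hd : Even (Module.finrank ℝ V))
    (γ : CliffordAlgebra Q →ₐ[ℝ] Module.End ℝ S)
    (hγ : Function.Bijective γ)
    (hS : Module.finrank ℝ S = 2 ^ (Module.finrank ℝ V / 2))
    (B : S →ₗ[ℝ] S →ₗ[ℝ] ℝ)
    (hBnd : ∀ x : S, (∀ y : S, B x y = 0) → x = 0)
    (σ s : ℝ) (hσ : σ = 1 ∨ σ = -1) (hs : s = 1 ∨ s = -1)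
    (hsym : ∀ x y : S, B x y = σ * B y x)
    (hadj : ∀ (x : CliffordAlgebra Q) (ξ₁ ξ₂ : S),
      B (γ x ξ₁) ξ₂ =
        B ξ₁ (γ (if s = 1 then CliffordAlgebra.reverse x
          else CliffordAlgebra.involute (CliffordAlgebra.reverse x)) ξ₂))
    (α : ExteriorAlgebra ℝ V)
    (hsq : ∃ (ξ : S) (κ : ℝ), (κ = 1 ∨ κ = -1) ∧
      ∀ χ : S, γ ((CliffordAlgebra.equivExterior Q).symm α) χ = (κ * B χ ξ) • ξ)
    (k : ℕ) (hk0 : 1 ≤ k) (hkd : k ≤ Module.finrank ℝ V)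
    (hkcond : (-1 : ℝ) ^ (k * (k - 1) / 2) *
        (if s = 1 then 1 else (-1 : ℝ) ^ k) = -σ) :
    (DirectSum.decompose (fun i : ℕ => ⋀[ℝ]^i V) α k : ExteriorAlgebra ℝ V) = 0 := by
  classical
  obtain ⟨ξ, κ, hκ, hξ⟩ := hsq
  set x : CliffordAlgebra Q := (CliffordAlgebra.equivExterior Q).symm α with hxdef
  have hσ0 : σ ≠ 0 := by rcases hσ with h | h <;> rw [h] <;> norm_num
  have keyA : ∀ χ₁ χ₂ : S, B (γ x χ₁) χ₂ = σ * B χ₁ (γ x χ₂) := by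
    intro χ₁ χ₂
    rw [hξ χ₁, hξ χ₂]
    simp only [map_smul, LinearMap.smul_apply, smul_eq_mul]
    rw [hsym ξ χ₂]
    ring
  have hveceq : ∀ χ : S,
      γ (if s = 1 then CliffordAlgebra.reverse x
        else CliffordAlgebra.involute (CliffordAlgebra.reverse x)) χ = σ • γ x χ := by
    intro χ₂
    have hBv : ∀ χ₁ : S,
        B χ₁ (γ (if s = 1 then CliffordAlgebra.reverse x
          else CliffordAlgebra.involute (CliffordAlgebra.reverse x)) χ₂ - σ • γ x χ₂) = 0 := by
      intro χ₁
      rw [map_sub, map_smul, ← hadj x χ₁ χ₂, keyA χ₁ χ₂, smul_eq_mul, sub_self]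
    have hv0 : (γ (if s = 1 then CliffordAlgebra.reverse x
        else CliffordAlgebra.involute (CliffordAlgebra.reverse x)) χ₂ - σ • γ x χ₂) = 0 := by
      apply hBnd
      intro y
      rw [hsym, hBv y, mul_zero]
    exact sub_eq_zero.mp hv0
  have hT : (if s = 1 then CliffordAlgebra.reverse x
      else CliffordAlgebra.involute (CliffordAlgebra.reverse x)) = σ • x := by
    apply hγ.injective
    rw [map_smul]
    apply LinearMap.ext
    intro χ
    rw [LinearMap.smul_apply]
    exact hveceq χ
  have hEq : CliffordAlgebra.equivExterior Q (if s = 1 then CliffordAlgebra.reverse x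
      else CliffordAlgebra.involute (CliffordAlgebra.reverse x)) = σ • α := by
    rw [hT, map_smul, hxdef, LinearEquiv.apply_symm_apply]
  rcases hs with hs1 | hs1
  · subst hs1
    rw [if_pos rfl] at hEq
    rw [if_pos rfl, mul_one] at hkcond
    refine component_eq_zero α
      (CliffordAlgebra.reverse (Q := (0 : QuadraticForm ℝ V)))
      (fun n => (-1 : ℝ) ^ (n * (n - 1) / 2)) σ hσ0
      (fun n y hy => reverse_exteriorPower n y hy) ?_ k hkcond
    rw [← hEq, equivExterior_reverse, hxdef, LinearEquiv.apply_symm_apply]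
  · subst hs1
    have hne : (-1 : ℝ) ≠ 1 := by norm_num
    rw [if_neg hne] at hEq
    rw [if_neg hne] at hkcond
    refine component_eq_zero α
      ((CliffordAlgebra.involute (Q := (0 : QuadraticForm ℝ V))).toLinearMap ∘ₗ
        CliffordAlgebra.reverse (Q := (0 : QuadraticForm ℝ V)))
      (fun n => (-1 : ℝ) ^ (n * (n - 1) / 2) * (-1 : ℝ) ^ n) σ hσ0 ?_ ?_ k hkcond
    · intro n y hy
      simp only [LinearMap.comp_apply, AlgHom.toLinearMap_apply]
      rw [reverse_exteriorPower n y hy, map_smul, involute_exteriorPower n y hy, smul_smul]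
    · simp only [LinearMap.comp_apply, AlgHom.toLinearMap_apply]
      rw [← hEq, equivExterior_involute, equivExterior_reverse, hxdef,
        LinearEquiv.apply_symm_apply]
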